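/- For a discrete-time linear control system on a Lie group G, the solution satisfies φ(k, g, u) = φ(k, e, u) · f₀^k(g) for all k ∈ ℕ, g ∈ G, and control sequences u. -/
import Mathlib


/-- Solution map of a discrete-time control system `g_{k+1} = f (g_k) (u_k)` on a group. -/
def ctrlSol {G U : Type*} (f : G → U → G) (u : ℕ → U) : ℕ → G → G
  | 0, g => g
  | (k + 1), g => f (ctrlSol f u k g) (u k)

/-- For a discrete-time linear control system on a Lie group `G`
(`f₀ := f · u₀` is an automorphism and `f_u g = f_u e * f₀ g`), the solution satisfies
`φ(k, g, u) = φ(k, e, u) * f₀^k(g)` for all `k`, `g`, `u`. -/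
theorem solution_formula_linear_system {G U : Type*} [Group G]
    (f : G → U → G) (u₀ : U)
    (hauto : ∀ g h : G, f (g * h) u₀ = f g u₀ * f h u₀)
    (hbij : Function.Bijective (fun g => f g u₀))
    (hlin : ∀ (u : U) (g : G), f g u = f 1 u * f g u₀) :
    ∀ (k : ℕ) (g : G) (u : ℕ → U),
      ctrlSol f u k g = ctrlSol f u k 1 * (fun g => f g u₀)^[k] g := by
  intro k g u
  induction k with
  | zero => simp [ctrlSol]
  | succ k ih =>
      simp only [ctrlSol]
      rw [ih, hlin (u k), hauto, hlin (u k) (ctrlSol f u k 1),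
        Function.iterate_succ_apply', mul_assoc]
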